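/- Let d ≥ 1 and let A, C ⊆ S^{d−1} ⊆ ℝ^d be closed sets with A = −A, C = −C, and A ∩ C = ∅. Then there exist K > 0 and δ ∈ (0,1) such that: (1) 0 ∉ C_δ − A_δ; (2) for all a ∈ A_δ and c ∈ C_δ, α_{a, c−a} ≥ K^{−1}; (3) for every k ∈ ℤ with k ∉ {0,1} and all a ∈ A_δ, c ∈ C_δ, |a + k(c−a)| ≥ K^{−1}|k| + 1; (4) for every integer k ≥ 1 and all a ∈ A_δ, c ∈ C_δ, |a + (k+1)(c−a)|² − |a + (1−k)(c−a)|² ≥ K^{−1} k. -/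

import Mathlib

open Finset

open scoped RealInnerProductSpace

noncomputable section

/-- Euclidean dot product on `Fin d → ℝ`. -/
def euclDot {d : ℕ} (a b : Fin d → ℝ) : ℝ := ∑ i, a i * b i

/-- Euclidean norm on `Fin d → ℝ`. -/
def euclNorm {d : ℕ} (a : Fin d → ℝ) : ℝ := Real.sqrt (∑ i, (a i) ^ 2)

/-- The `δ`-thickening `R_δ = {r + v : r ∈ R, |v| ≤ δ}` of a set `R ⊆ ℝ^d`. -/
def thick {d : ℕ} (R : Set (Fin d → ℝ)) (δ : ℝ) : Set (Fin d → ℝ) :=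
  {x | ∃ r ∈ R, euclNorm (x - r) ≤ δ}

/-- `α_{a,b} = (1 − (a·b)²/(|a|²|b|²))^{1/2}`. -/
def alphaAngle {d : ℕ} (a b : Fin d → ℝ) : ℝ :=
  Real.sqrt (1 - (euclDot a b) ^ 2 / (euclNorm a ^ 2 * euclNorm b ^ 2))

/-- Reinterpret a vector in `Fin d → ℝ` as an element of Euclidean space. -/
def toE {d : ℕ} (x : Fin d → ℝ) : EuclideanSpace ℝ (Fin d) := WithLp.toLp 2 x

/-- Reinterpret a set of vectors as a set in Euclidean space. -/
def toSetE {d : ℕ} (A : Set (Fin d → ℝ)) : Set (EuclideanSpace ℝ (Fin d)) := WithLp.ofLp ⁻¹' A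

lemma toE_add {d : ℕ} (x y : Fin d → ℝ) : toE (x + y) = toE x + toE y := rfl
lemma toE_sub {d : ℕ} (x y : Fin d → ℝ) : toE (x - y) = toE x - toE y := rfl
lemma toE_neg {d : ℕ} (x : Fin d → ℝ) : toE (-x) = -toE x := rfl
lemma toE_smul {d : ℕ} (r : ℝ) (x : Fin d → ℝ) : toE (r • x) = r • toE x := rfl

lemma euclNorm_eq {d : ℕ} (x : Fin d → ℝ) : euclNorm x = ‖toE x‖ := by
  rw [toE, EuclideanSpace.norm_eq]
  simp [euclNorm, Real.norm_eq_abs, sq_abs]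

lemma euclDot_eq {d : ℕ} (x y : Fin d → ℝ) : euclDot x y = ⟪toE x, toE y⟫ := by
  simp [euclDot, toE, PiLp.inner_apply, RCLike.inner_apply, mul_comm]

section RealLemmas
variable {ε δ P Q R S : ℝ}

lemma realC2 (hε0 : 0 < ε) (hε1 : ε ≤ 1) (hδ : δ = ε^3/1000)
    (hP1 : 1 - 2*δ ≤ P) (hP2 : P ≤ 1 + 3*δ) (hQ1 : 1 - 2*δ ≤ Q) (hQ2 : Q ≤ 1 + 3*δ)
    (hR1 : ε^2/4 ≤ R) (hR2 : R ≤ (2 - ε^2/8)^2) (hS : 2*S = Q - P - R) :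
    S^2 ≤ (1 - (ε^2/64)^2) * (P * R) := by
  subst hδ
  have ht2 : 0 ≤ ε^2 := sq_nonneg ε
  have ht3 : ε^3 ≤ ε^2 := pow_le_pow_of_le_one hε0.le hε1 (by norm_num)
  have ht4 : ε^4 ≤ ε^2 := pow_le_pow_of_le_one hε0.le hε1 (by norm_num)
  have ht5 : ε^5 ≤ ε^2 := pow_le_pow_of_le_one hε0.le hε1 (by norm_num)
  have ht6 : ε^6 ≤ ε^2 := pow_le_pow_of_le_one hε0.le hε1 (by norm_num)
  have hR0 : 0 ≤ R := le_trans (by positivity) hR1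
  have h1 : (2*S)^2 ≤ (R + 6*(ε^3/1000))^2 := by
    have hd0 : 0 ≤ ε^3/1000 := by positivity
    exact sq_le_sq' (by linarith) (by linarith)
  have hH : 0 ≤ (R - ε^2/4) * ((2 - ε^2/8)^2 - R) :=
    mul_nonneg (by linarith) (by linarith)
  have hcoef : 0 ≤ ε^2/4 - ε^3/50 - 17*ε^4/1024 + ε^7/512000 := by
    have ht7 : 0 ≤ ε^7 := by positivity
    linarith
  have hcoefR : 0 ≤ R * (ε^2/4 - ε^3/50 - 17*ε^4/1024 + ε^7/512000) := mul_nonneg hR0 hcoef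
  have hrest : 0 ≤ ε^2 - ε^4/8 + 15481*ε^6/4000000 := by
    have : 0 ≤ ε^6 := by positivity
    linarith
  have h2 : (R + 6*(ε^3/1000))^2 ≤ (1 - (ε^2/64)^2) * 4 * ((1 - 2*(ε^3/1000)) * R) := by
    linarith [hH, hcoefR, hrest]
  have h3 : (1 - (ε^2/64)^2) * 4 * ((1 - 2*(ε^3/1000)) * R) ≤ (1 - (ε^2/64)^2) * 4 * (P * R) := by
    have hc2 : (0:ℝ) ≤ (1 - (ε^2/64)^2) * 4 := by nlinarith
    exact mul_le_mul_of_nonneg_left (mul_le_mul_of_nonneg_right (by linarith) hR0) hc2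
  linarith

lemma realC3a (hε0 : 0 < ε) (hε1 : ε ≤ 1) (hδ : δ = ε^3/1000)
    (hP1 : 1 - 2*δ ≤ P) (hP2 : P ≤ 1 + 3*δ) (hQ1 : 1 - 2*δ ≤ Q) (hQ2 : Q ≤ 1 + 3*δ)
    (hR1 : ε^2/4 ≤ R) (hS : 2*S = Q - P - R) {x : ℝ} (hx : 2 ≤ x) :
    (ε^2/64 * x + 1)^2 ≤ P + 2*x*S + x^2*R := by
  subst hδ
  have ht3 : ε^3 ≤ ε^2 := pow_le_pow_of_le_one hε0.le hε1 (by norm_num)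
  have ht4 : ε^4 ≤ ε^2 := pow_le_pow_of_le_one hε0.le hε1 (by norm_num)
  have hx0 : (0:ℝ) ≤ x := by linarith
  have hT1 : 0 ≤ (1 + 3*(ε^3/1000) - P) * (x - 1) := mul_nonneg (by linarith) (by linarith)
  have hT2 : 0 ≤ (Q - (1 - 2*(ε^3/1000))) * x := mul_nonneg (by linarith) hx0
  have hT3 : 0 ≤ (R - ε^2/4) * (x * (x - 1)) :=
    mul_nonneg (by linarith) (mul_nonneg hx0 (by linarith))
  have hA : (0:ℝ) ≤ ε^2/4 - (ε^2/64)^2 := by nlinarith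
  have hU1 : 0 ≤ (ε^2/4 - (ε^2/64)^2) * (x * (x - 2)) :=
    mul_nonneg hA (mul_nonneg hx0 (by linarith))
  have hU2 : 0 ≤ x * (2*(ε^2/4 - (ε^2/64)^2) - (ε^2/4 + 5*(ε^3/1000) + 2*(ε^2/64))) := by
    apply mul_nonneg hx0
    nlinarith
  nlinarith [hT1, hT2, hT3, hU1, hU2, hε0.le]

lemma realC3b (hε0 : 0 < ε) (hε1 : ε ≤ 1) (hδ : δ = ε^3/1000)
    (hP1 : 1 - 2*δ ≤ P) (hP2 : P ≤ 1 + 3*δ) (hQ1 : 1 - 2*δ ≤ Q) (hQ2 : Q ≤ 1 + 3*δ)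
    (hR1 : ε^2/4 ≤ R) (hS : 2*S = Q - P - R) {x : ℝ} (hx : x ≤ -1) :
    (ε^2/64 * (-x) + 1)^2 ≤ P + 2*x*S + x^2*R := by
  subst hδ
  have ht3 : ε^3 ≤ ε^2 := pow_le_pow_of_le_one hε0.le hε1 (by norm_num)
  have ht4 : ε^4 ≤ ε^2 := pow_le_pow_of_le_one hε0.le hε1 (by norm_num)
  have hT1 : 0 ≤ (P - (1 - 2*(ε^3/1000))) * (1 - x) := mul_nonneg (by linarith) (by linarith)
  have hT2 : 0 ≤ ((1 + 3*(ε^3/1000)) - Q) * (-x) := mul_nonneg (by linarith) (by linarith)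
  have hT3 : 0 ≤ (R - ε^2/4) * (x * (x - 1)) := by
    apply mul_nonneg (by linarith)
    nlinarith
  have hA : (0:ℝ) ≤ ε^2/4 - (ε^2/64)^2 := by nlinarith
  have hU1 : 0 ≤ (ε^2/4 - (ε^2/64)^2) * (x^2 - 1) := by
    apply mul_nonneg hA
    nlinarith
  have hU2 : 0 ≤ (ε^2/4 - 5*(ε^3/1000) - 2*(ε^2/64)) * (-x) := by
    apply mul_nonneg (by linarith) (by linarith)
  have hU3 : (0:ℝ) ≤ ε^2/4 - (ε^2/64)^2 - 2*(ε^3/1000) := by nlinarith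
  nlinarith [hT1, hT2, hT3, hU1, hU2, hU3]

lemma realC4 (hε0 : 0 < ε) (hε1 : ε ≤ 1) (hδ : δ = ε^3/1000)
    (hP1 : 1 - 2*δ ≤ P) (hP2 : P ≤ 1 + 3*δ) (hQ1 : 1 - 2*δ ≤ Q) (hQ2 : Q ≤ 1 + 3*δ)
    (hR1 : ε^2/4 ≤ R) (hS : 2*S = Q - P - R) {x : ℝ} (hx : 1 ≤ x) :
    ε^2/64 * x ≤ (P + 2*(x+1)*S + (x+1)^2*R) - (P + 2*(1-x)*S + (1-x)^2*R) := by
  subst hδ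
  have ht3 : ε^3 ≤ ε^2 := pow_le_pow_of_le_one hε0.le hε1 (by norm_num)
  have hx0 : (0:ℝ) ≤ x := by linarith
  have hT1 : 0 ≤ x * (Q - P + 5*(ε^3/1000)) := mul_nonneg hx0 (by linarith)
  have hT2 : 0 ≤ x * (R - ε^2/4) := mul_nonneg hx0 (by linarith)
  have hT3 : 0 ≤ x * (ε^2/2 - 10*(ε^3/1000) - ε^2/64) := mul_nonneg hx0 (by linarith)
  nlinarith [hT1, hT2, hT3]

end RealLemmas

lemma sq_bounds {δ t : ℝ} (hδ0 : 0 ≤ δ) (hδ2 : δ ≤ 1/1000)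
    (h1 : 1 - δ ≤ t) (h2 : t ≤ 1 + δ) : 1 - 2*δ ≤ t^2 ∧ t^2 ≤ 1 + 3*δ := by
  constructor <;> nlinarith

/-- Expansion of `‖a + x • m‖²` in a real inner product space. -/
lemma norm_add_smul_sq {E : Type*} [NormedAddCommGroup E] [InnerProductSpace ℝ E]
    (a m : E) (x : ℝ) : ‖a + x • m‖^2 = ‖a‖^2 + 2*x*⟪a, m⟫ + x^2*‖m‖^2 := by
  rw [norm_add_sq_real, real_inner_smul_right, norm_smul]
  simp only [Real.norm_eq_abs, mul_pow, sq_abs]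
  ring

/-- Quantitative bounds for points in the thickenings. -/
lemma keyA {E : Type*} [NormedAddCommGroup E] [InnerProductSpace ℝ E]
    {ε δ : ℝ} (hε0 : 0 < ε) (hε1 : ε ≤ 1) (hδ : δ = ε^3/1000)
    {a c a₀ c₀ : E} (ha₀ : ‖a₀‖ = 1) (hc₀ : ‖c₀‖ = 1)
    (hsep : ε ≤ ‖c₀ - a₀‖) (hsep' : ε ≤ ‖c₀ + a₀‖)
    (ha : ‖a - a₀‖ ≤ δ) (hc : ‖c - c₀‖ ≤ δ) :
    (ε/2 ≤ ‖c - a‖) ∧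
    (1 - 2*δ ≤ ‖a‖^2 ∧ ‖a‖^2 ≤ 1 + 3*δ) ∧
    (1 - 2*δ ≤ ‖c‖^2 ∧ ‖c‖^2 ≤ 1 + 3*δ) ∧
    (ε^2/4 ≤ ‖c - a‖^2 ∧ ‖c - a‖^2 ≤ (2 - ε^2/8)^2) ∧
    (2*⟪a, c - a⟫ = ‖c‖^2 - ‖a‖^2 - ‖c - a‖^2) := by
  have hδ0 : 0 ≤ δ := by rw [hδ]; positivity
  have he3e : ε^3 ≤ ε := by
    have h := pow_le_pow_of_le_one hε0.le hε1 (by norm_num : 1 ≤ 3)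
    rwa [pow_one] at h
  have he3e2 : ε^3 ≤ ε^2 := pow_le_pow_of_le_one hε0.le hε1 (by norm_num)
  have hδ1 : δ ≤ ε/1000 := by rw [hδ]; linarith
  have hδ2 : δ ≤ 1/1000 := le_trans hδ1 (by linarith)
  have hδ3 : 2*δ ≤ ε^2/8 := by rw [hδ]; linarith
  have haa := abs_le.1 (abs_norm_sub_norm_le a a₀)
  have hcc := abs_le.1 (abs_norm_sub_norm_le c c₀)
  rw [ha₀] at haa; rw [hc₀] at hcc
  have hna1 : 1 - δ ≤ ‖a‖ := by linarith [haa.1]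
  have hna2 : ‖a‖ ≤ 1 + δ := by linarith [haa.2]
  have hnc1 : 1 - δ ≤ ‖c‖ := by linarith [hcc.1]
  have hnc2 : ‖c‖ ≤ 1 + δ := by linarith [hcc.2]
  have h2 : ‖(c - c₀) - (a - a₀)‖ ≤ 2*δ := by
    have := norm_sub_le (c - c₀) (a - a₀); linarith
  have h6 : c - a = (c₀ - a₀) + ((c - c₀) - (a - a₀)) := by abel
  have hm1 : ε - 2*δ ≤ ‖c - a‖ := by
    have h1 : ‖c₀ - a₀‖ - ‖(c - c₀) - (a - a₀)‖ ≤ ‖c - a‖ := by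
      have h8 : c₀ - a₀ = (c - a) - ((c - c₀) - (a - a₀)) := by abel
      have := norm_sub_le (c - a) ((c - c₀) - (a - a₀))
      rw [h8]; linarith
    linarith
  have hm0 : ε/2 ≤ ‖c - a‖ := by linarith
  have hm2 : ‖c - a‖ ≤ 2 - ε^2/8 := by
    have hpar : ‖c₀ - a₀‖^2 + ‖c₀ + a₀‖^2 = 4 := by
      have h1 := norm_sub_sq_real c₀ a₀
      have h2 := norm_add_sq_real c₀ a₀
      rw [ha₀, hc₀] at h1 h2; linarith
    have h3 : ‖c₀ - a₀‖^2 ≤ (2 - ε^2/4)^2 := by nlinarith [sq_nonneg ε, sq_nonneg (ε^2), hε1, hε0.le]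
    have h4 : ‖c₀ - a₀‖ ≤ 2 - ε^2/4 := by
      have hy : (0:ℝ) ≤ 2 - ε^2/4 := by nlinarith
      exact (pow_le_pow_iff_left₀ (norm_nonneg _) hy two_ne_zero).1 h3
    have h5 : ‖c - a‖ ≤ ‖c₀ - a₀‖ + 2*δ := by
      have h7 := norm_add_le (c₀ - a₀) ((c - c₀) - (a - a₀))
      rw [h6]; linarith
    linarith
  refine ⟨hm0, sq_bounds hδ0 hδ2 hna1 hna2, sq_bounds hδ0 hδ2 hnc1 hnc2, ⟨?_, ?_⟩, ?_⟩
  · have := pow_le_pow_left₀ (by positivity : (0:ℝ) ≤ ε/2) hm0 2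
    linarith [this]
  · have := pow_le_pow_left₀ (norm_nonneg (c - a)) hm2 2
    linarith [this]
  · have h1 : ‖c - a‖^2 = ‖c‖^2 - 2*⟪c, a⟫ + ‖a‖^2 := norm_sub_sq_real c a
    have h2 : ⟪a, c - a⟫ = ⟪a, c⟫ - ‖a‖^2 := by
      rw [inner_sub_right, real_inner_self_eq_norm_sq]
    have h3 : ⟪c, a⟫ = ⟪a, c⟫ := real_inner_comm a c
    linarith

/-- sphere geometry lemma: for closed, symmetric, disjoint subsets `A, C`
of the unit sphere `S^{d−1}`, there exist `K > 0` and `δ ∈ (0,1)` with the four stated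
uniform geometric properties of the thickenings `A_δ`, `C_δ`. -/
theorem sphere_geometry {d : ℕ} (hd : 1 ≤ d) (A C : Set (Fin d → ℝ))
    (hAcl : IsClosed A) (hCcl : IsClosed C)
    (hAsub : A ⊆ {x | euclNorm x = 1}) (hCsub : C ⊆ {x | euclNorm x = 1})
    (hAneg : A = -A) (hCneg : C = -C) (hdisj : A ∩ C = ∅) :
    ∃ K δ : ℝ, 0 < K ∧ 0 < δ ∧ δ < 1 ∧
      (∀ a ∈ thick A δ, ∀ c ∈ thick C δ, c - a ≠ 0) ∧
      (∀ a ∈ thick A δ, ∀ c ∈ thick C δ, K⁻¹ ≤ alphaAngle a (c - a)) ∧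
      (∀ k : ℤ, k ≠ 0 → k ≠ 1 → ∀ a ∈ thick A δ, ∀ c ∈ thick C δ,
        K⁻¹ * |(k : ℝ)| + 1 ≤ euclNorm (a + (k : ℝ) • (c - a))) ∧
      (∀ k : ℤ, 1 ≤ k → ∀ a ∈ thick A δ, ∀ c ∈ thick C δ,
        K⁻¹ * (k : ℝ) ≤ euclNorm (a + ((k : ℝ) + 1) • (c - a)) ^ 2 -
          euclNorm (a + (1 - (k : ℝ)) • (c - a)) ^ 2) := by
  classical
  by_cases hAne : A.Nonempty
  · by_cases hCne : C.Nonempty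
    · -- main case
      -- A and C are compact as subsets of Euclidean space
      have hcompact : ∀ (B : Set (Fin d → ℝ)), IsClosed B → B ⊆ {x | euclNorm x = 1} →
          IsCompact (toSetE B) := by
        intro B hBcl hB
        have hb : Bornology.IsBounded (toSetE B) := by
          rw [isBounded_iff_forall_norm_le]
          refine ⟨1, fun x hx => ?_⟩
          have h : euclNorm x = 1 := hB hx
          rw [euclNorm_eq] at h
          exact le_of_eq h
        exact Metric.isCompact_of_isClosed_isBounded (hBcl.preimage (PiLp.continuous_ofLp 2 _)) hb
      have hAcp : IsCompact (toSetE A) := hcompact A hAcl hAsub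
      have hCcp : IsCompact (toSetE C) := hcompact C hCcl hCsub
      obtain ⟨p, hp, hmin⟩ := (hAcp.prod hCcp).exists_isMinOn
        (Set.Nonempty.prod (s := toSetE A) (t := toSetE C) ⟨toE hAne.some, hAne.some_mem⟩ ⟨toE hCne.some, hCne.some_mem⟩)
        (continuous_fst.dist continuous_snd).continuousOn
      have hp1 : p.1.ofLp ∈ A := hp.1
      have hp2 : p.2.ofLp ∈ C := hp.2
      have hε₀ : 0 < dist p.1 p.2 := by
        rw [dist_pos]
        intro h
        have : p.1.ofLp ∈ A ∩ C := ⟨hp1, by rw [h]; exact hp2⟩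
        rw [hdisj] at this
        exact this
      set ε : ℝ := min (dist p.1 p.2) 1 with hεdef
      have hε0 : 0 < ε := lt_min hε₀ one_pos
      have hε1 : ε ≤ 1 := min_le_right _ _
      have hsepAC : ∀ a₀ ∈ A, ∀ c₀ ∈ C, ε ≤ ‖toE c₀ - toE a₀‖ := by
        intro a₀ ha₀ c₀ hc₀
        have h1 : ε ≤ dist (toE a₀) (toE c₀) :=
          le_trans (min_le_left _ _)
            (isMinOn_iff.1 hmin (toE a₀, toE c₀) ⟨ha₀, hc₀⟩)
        rwa [dist_eq_norm, norm_sub_rev] at h1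
      have hδ'1 : ε^3/1000 ≤ 1/1000 := by
        have : ε^3 ≤ 1 := by
          calc ε^3 ≤ 1^3 := pow_le_pow_left₀ hε0.le hε1 3
          _ = 1 := one_pow 3
        linarith
      have hmain : ∀ a ∈ thick A (ε^3/1000), ∀ c ∈ thick C (ε^3/1000),
          (ε/2 ≤ ‖toE (c - a)‖) ∧
          (1 - 2*(ε^3/1000) ≤ ‖toE a‖^2 ∧ ‖toE a‖^2 ≤ 1 + 3*(ε^3/1000)) ∧
          (1 - 2*(ε^3/1000) ≤ ‖toE c‖^2 ∧ ‖toE c‖^2 ≤ 1 + 3*(ε^3/1000)) ∧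
          (ε^2/4 ≤ ‖toE (c - a)‖^2 ∧ ‖toE (c - a)‖^2 ≤ (2 - ε^2/8)^2) ∧
          (2*⟪toE a, toE (c - a)⟫ = ‖toE c‖^2 - ‖toE a‖^2 - ‖toE (c - a)‖^2) := by
        rintro a ⟨a₀, ha₀A, ha₀n⟩ c ⟨c₀, hc₀C, hc₀n⟩
        rw [euclNorm_eq, toE_sub] at ha₀n hc₀n
        have hna₀ : ‖toE a₀‖ = 1 := by
          have h : euclNorm a₀ = 1 := hAsub ha₀A
          rwa [euclNorm_eq] at h
        have hnc₀ : ‖toE c₀‖ = 1 := by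
          have h : euclNorm c₀ = 1 := hCsub hc₀C
          rwa [euclNorm_eq] at h
        have hsep : ε ≤ ‖toE c₀ - toE a₀‖ := hsepAC a₀ ha₀A c₀ hc₀C
        have hnegmem : -a₀ ∈ A := by
          apply Set.mem_neg.1
          rw [← hAneg]
          exact ha₀A
        have hsep' : ε ≤ ‖toE c₀ + toE a₀‖ := by
          have h := hsepAC (-a₀) hnegmem c₀ hc₀C
          have e : toE c₀ + toE a₀ = toE c₀ - (-(toE a₀)) := (sub_neg_eq_add _ _).symm
          rw [e]
          rwa [toE_neg] at h
        exact keyA (a := toE a) (c := toE c) (a₀ := toE a₀) (c₀ := toE c₀)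
          hε0 hε1 rfl hna₀ hnc₀ hsep hsep' ha₀n hc₀n
      have hKpos : 0 < (ε^2/64)⁻¹ := inv_pos.2 (div_pos (pow_pos hε0 2) (by norm_num))
      have hδpos : 0 < ε^3/1000 := div_pos (pow_pos hε0 3) (by norm_num)
      refine ⟨(ε^2/64)⁻¹, ε^3/1000, hKpos, hδpos, by linarith, ?_, ?_, ?_, ?_⟩
      · -- (1) c - a ≠ 0
        intro a ha c hc h
        have h1 := (hmain a ha c hc).1
        rw [h] at h1
        have h2 : toE (0 : Fin d → ℝ) = 0 := rfl
        rw [h2, norm_zero] at h1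
        linarith
      · -- (2) angle bound
        intro a ha c hc
        obtain ⟨-, ⟨hP1, hP2⟩, ⟨hQ1, hQ2⟩, ⟨hR1, hR2⟩, hS⟩ := hmain a ha c hc
        have hPpos : 0 < ‖toE a‖^2 := by linarith
        have hRpos : 0 < ‖toE (c - a)‖^2 := lt_of_lt_of_le (by positivity) hR1
        have hPR : 0 < ‖toE a‖^2 * ‖toE (c - a)‖^2 := mul_pos hPpos hRpos
        have hC2 := realC2 hε0 hε1 rfl hP1 hP2 hQ1 hQ2 hR1 hR2 hS
        have hdiv : ⟪toE a, toE (c - a)⟫^2 / (‖toE a‖^2 * ‖toE (c - a)‖^2)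
            ≤ 1 - (ε^2/64)^2 := (div_le_iff₀ hPR).2 hC2
        have hsq : ε^2/64 ≤ Real.sqrt (1 - ⟪toE a, toE (c - a)⟫^2 /
            (‖toE a‖^2 * ‖toE (c - a)‖^2)) := by
          calc ε^2/64 = Real.sqrt ((ε^2/64)^2) := by rw [Real.sqrt_sq (by positivity)]
          _ ≤ _ := Real.sqrt_le_sqrt (by linarith)
        rw [inv_inv]
        show ε^2/64 ≤ Real.sqrt (1 - (euclDot a (c - a))^2 /
          (euclNorm a^2 * euclNorm (c - a)^2))
        rw [euclDot_eq, euclNorm_eq a, euclNorm_eq (c - a)]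
        exact hsq
      · -- (3)
        intro k hk0 hk1 a ha c hc
        obtain ⟨-, ⟨hP1, hP2⟩, ⟨hQ1, hQ2⟩, ⟨hR1, hR2⟩, hS⟩ := hmain a ha c hc
        have hexp : ‖toE (a + (k:ℝ) • (c - a))‖^2 = ‖toE a‖^2 +
            2*(k:ℝ)*⟪toE a, toE (c - a)⟫ + (k:ℝ)^2*‖toE (c - a)‖^2 :=
          by rw [toE_add, toE_smul]; exact norm_add_smul_sq (toE a) (toE (c - a)) (k:ℝ)
        have hcases : (k:ℝ) ≤ -1 ∨ 2 ≤ (k:ℝ) := by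
          rcases (by omega : k ≤ -1 ∨ 2 ≤ k) with h | h
          · exact Or.inl (by exact_mod_cast h)
          · exact Or.inr (by exact_mod_cast h)
        have hsq : (ε^2/64 * |(k:ℝ)| + 1)^2 ≤ ‖toE (a + (k:ℝ) • (c - a))‖^2 := by
          rcases hcases with h | h
          · rw [abs_of_nonpos (by linarith), hexp]
            exact realC3b hε0 hε1 rfl hP1 hP2 hQ1 hQ2 hR1 hS h
          · rw [abs_of_nonneg (by linarith), hexp]
            exact realC3a hε0 hε1 rfl hP1 hP2 hQ1 hQ2 hR1 hS h
        rw [inv_inv, euclNorm_eq]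
        exact (pow_le_pow_iff_left₀ (by positivity) (norm_nonneg _) two_ne_zero).1 hsq
      · -- (4)
        intro k hk a ha c hc
        obtain ⟨-, ⟨hP1, hP2⟩, ⟨hQ1, hQ2⟩, ⟨hR1, hR2⟩, hS⟩ := hmain a ha c hc
        have hexp1 : ‖toE (a + ((k:ℝ) + 1) • (c - a))‖^2 = ‖toE a‖^2 +
            2*((k:ℝ)+1)*⟪toE a, toE (c - a)⟫ + ((k:ℝ)+1)^2*‖toE (c - a)‖^2 :=
          by rw [toE_add, toE_smul]; exact norm_add_smul_sq (toE a) (toE (c - a)) ((k:ℝ)+1)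
        have hexp2 : ‖toE (a + (1 - (k:ℝ)) • (c - a))‖^2 = ‖toE a‖^2 +
            2*(1-(k:ℝ))*⟪toE a, toE (c - a)⟫ + (1-(k:ℝ))^2*‖toE (c - a)‖^2 :=
          by rw [toE_add, toE_smul]; exact norm_add_smul_sq (toE a) (toE (c - a)) (1-(k:ℝ))
        have hx : (1:ℝ) ≤ (k:ℝ) := by exact_mod_cast hk
        have h4 := realC4 hε0 hε1 rfl hP1 hP2 hQ1 hQ2 hR1 hS hx
        rw [inv_inv, euclNorm_eq, euclNorm_eq]
        linarith [h4, hexp1, hexp2]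
    · -- C empty
      refine ⟨1, 1/2, one_pos, by norm_num, by norm_num, ?_, ?_, ?_, ?_⟩
      · rintro a ha c ⟨r, hr, -⟩
        exact absurd ⟨r, hr⟩ hCne
      · rintro a ha c ⟨r, hr, -⟩
        exact absurd ⟨r, hr⟩ hCne
      · rintro k hk0 hk1 a ha c ⟨r, hr, -⟩
        exact absurd ⟨r, hr⟩ hCne
      · rintro k hk a ha c ⟨r, hr, -⟩
        exact absurd ⟨r, hr⟩ hCne
  · -- A empty
    refine ⟨1, 1/2, one_pos, by norm_num, by norm_num, ?_, ?_, ?_, ?_⟩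
    · rintro a ⟨r, hr, -⟩
      exact absurd ⟨r, hr⟩ hAne
    · rintro a ⟨r, hr, -⟩
      exact absurd ⟨r, hr⟩ hAne
    · rintro k hk0 hk1 a ⟨r, hr, -⟩
      exact absurd ⟨r, hr⟩ hAne
    · rintro k hk a ⟨r, hr, -⟩
      exact absurd ⟨r, hr⟩ hAne

end
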